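/- Every word over the vertex set of a simplicial graph is equivalent, under the equivalence relation generated by deleting adjacent equal letters and swapping adjacent letters joined by an edge, to a reduced word (a word in which whenever two occurrences of the same vertex appear, some vertex not adjacent to it lies strictly between them). -/

import Mathlib

/-- One-step moves on words over the vertex set of a simplicial graph:
deleting one of two adjacent equal letters, or swapping two adjacent letters
joined by an edge. -/
inductive WordStep {V : Type*} (G : SimpleGraph V) : List V → List V → Prop
  | del (l r : List V) (a : V) : WordStep G (l ++ a :: a :: r) (l ++ a :: r)
  | swap (l r : List V) (a b : V) (h : G.Adj a b) :
      WordStep G (l ++ a :: b :: r) (l ++ b :: a :: r)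

/-- The equivalence relation on words generated by the moves. -/
def WordEquiv {V : Type*} (G : SimpleGraph V) : List V → List V → Prop :=
  Relation.EqvGen (WordStep G)

/-- A word is reduced if whenever two occurrences of the same vertex appear,
some vertex not adjacent to it lies strictly between them. -/
def IsReducedWord {V : Type*} (G : SimpleGraph V) (w : List V) : Prop :=
  ∀ k l : Fin w.length, (k : ℕ) < (l : ℕ) → w.get k = w.get l →
    ∃ p : Fin w.length, (k : ℕ) < (p : ℕ) ∧ (p : ℕ) < (l : ℕ) ∧ ¬ G.Adj (w.get k) (w.get p)

lemma wordEquiv_shuffle {V : Type*} (G : SimpleGraph V) (a : V) :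
    ∀ (m l r : List V), (∀ b ∈ m, G.Adj a b) →
      WordEquiv G (l ++ a :: (m ++ r)) (l ++ (m ++ a :: r))
  | [], l, r, _ => Relation.EqvGen.refl _
  | b :: m, l, r, h => by
      have hs : WordStep G (l ++ a :: b :: (m ++ r)) (l ++ b :: a :: (m ++ r)) :=
        WordStep.swap l (m ++ r) a b (h b (by simp))
      have h2 := wordEquiv_shuffle G a m (l ++ [b]) r (fun c hc => h c (by simp [hc]))
      refine Relation.EqvGen.trans _ _ _ (Relation.EqvGen.rel _ _ hs) ?_
      simpa [WordEquiv] using h2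

lemma every_word_equiv_reduced_aux {V : Type*} (G : SimpleGraph V) :
    ∀ (n : ℕ) (w : List V), w.length ≤ n →
      ∃ w' : List V, WordEquiv G w w' ∧ IsReducedWord G w' := by
  intro n
  induction n with
  | zero =>
      intro w hw
      have : w = [] := List.eq_nil_of_length_eq_zero (Nat.le_zero.mp hw)
      subst this
      exact ⟨[], Relation.EqvGen.refl _, fun k _ _ _ => absurd k.isLt (by simp)⟩
  | succ n ih =>
      intro w hw
      by_cases hred : IsReducedWord G w
      · exact ⟨w, Relation.EqvGen.refl _, hred⟩
      · simp only [IsReducedWord, not_forall, not_exists, not_and, not_not] at hred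
        obtain ⟨k, l, hkl, heq, hall⟩ := hred
        set a := w.get k with ha
        set L := w.take (k : ℕ) with hL
        set M := (w.take (l : ℕ)).drop ((k : ℕ) + 1) with hM
        set R := w.drop ((l : ℕ) + 1) with hR
        have hll : (l : ℕ) < w.length := l.isLt
        have hkk : (k : ℕ) < w.length := k.isLt
        have hkl' : (k : ℕ) < (w.take (l : ℕ)).length := by
          simp [List.length_take]; omega
        have hdecomp : w = L ++ a :: (M ++ a :: R) := by
          have h1 : w = w.take (l : ℕ) ++ w.get l :: R := by
            rw [hR]
            conv_lhs => rw [← List.take_append_drop (l : ℕ) w]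
            congr 1
            exact List.drop_eq_getElem_cons hll
          have h2 : w.take (l : ℕ) = L ++ a :: M := by
            conv_lhs => rw [← List.take_append_drop (k : ℕ) (w.take (l : ℕ))]
            congr 1
            · rw [hL, List.take_take, min_eq_left (le_of_lt hkl)]
            · rw [hM]
              have := List.drop_eq_getElem_cons hkl'
              rw [this]
              congr 1
              · rw [ha]; simp [List.getElem_take]
          rw [h1, h2, ← heq, ha]
          simp
        have hMadj : ∀ b ∈ M, G.Adj a b := by
          intro b hb
          rw [hM] at hb
          obtain ⟨i, hi, hib⟩ := List.getElem_of_mem hb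
          have hilen : (k : ℕ) + 1 + i < (w.take (l : ℕ)).length := by
            simp only [List.length_drop] at hi
            omega
          have hival : ((w.take (l : ℕ)).drop ((k : ℕ) + 1))[i] = w.get ⟨(k : ℕ) + 1 + i, by
              simp [List.length_take] at hilen; omega⟩ := by
            rw [List.getElem_drop]
            simp [List.getElem_take, List.get_eq_getElem]
          have hp := hall ⟨(k : ℕ) + 1 + i, by simp [List.length_take] at hilen; omega⟩
            (by simp; omega) (by simp [List.length_take] at hilen; simp; omega)
          rw [← hib, hival]
          exact hp
        -- equivalence steps
        have e1 : WordEquiv G w (L ++ (M ++ a :: (a :: R))) := by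
          rw [hdecomp]
          exact wordEquiv_shuffle G a M L (a :: R) hMadj
        have e2 : WordStep G ((L ++ M) ++ a :: a :: R) ((L ++ M) ++ a :: R) :=
          WordStep.del (L ++ M) R a
        have e2' : WordEquiv G (L ++ (M ++ a :: (a :: R))) (L ++ (M ++ a :: R)) := by
          have := Relation.EqvGen.rel _ _ e2
          simpa [List.append_assoc, WordEquiv] using this
        have hlen : (L ++ (M ++ a :: R)).length ≤ n := by
          have : w.length = (L ++ (M ++ a :: R)).length + 1 := by
            rw [hdecomp]; simp; omega
          omega
        obtain ⟨w', hw1, hw2⟩ := ih (L ++ (M ++ a :: R)) hlen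
        exact ⟨w', Relation.EqvGen.trans _ _ _
          (Relation.EqvGen.trans _ _ _ e1 e2') hw1, hw2⟩

/-- Every word is equivalent to a reduced word. -/
theorem every_word_equiv_reduced {V : Type*} (G : SimpleGraph V) (w : List V) :
    ∃ w' : List V, WordEquiv G w w' ∧ IsReducedWord G w' :=
  every_word_equiv_reduced_aux G w.length w le_rfl
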